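/- Under decay of correlations against L¹ with non-increasing rate γ → 0, for any A, B ∈ ℬ with 1_A ∈ 𝒞 and positive integers s, t, m: |P(𝒲_{0,s}(A) ∩ f^{-(s+t)}(B)) − P(B)(1 − s·P(A))| ≤ Ξ_{A,s} · P(B), where Ξ_{A,s} := ‖1_A‖_𝒞 · s · γ(t) + ‖1_A‖_𝒞 (s − R(A)) [P(A) + ‖1_A‖_𝒞 γ(t)] ∑_{q=R(A)}^{s-1} γ(q) + s(s − R(A)) [P(A)² + P(A)‖1_A‖_𝒞 γ(t)]. -/

import Mathlib

open MeasureTheory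

/-- The event of avoiding `A` during the time window `[s, s+ℓ)`. -/
def avoidWindow {X : Type*} (T : X → X) (s ℓ : ℕ) (A : Set X) : Set X :=
  ⋂ i ∈ Finset.Ico s (s + ℓ), T^[i] ⁻¹' Aᶜ

/-- Bonferroni lower bound in `ENNReal` form. -/
private lemma bonferroni {X : Type*} [MeasurableSpace X] (μ : Measure X)
    (g : ℕ → Set X) (hg : ∀ i, MeasurableSet (g i)) (n : ℕ) :
    ∑ i ∈ Finset.range n, μ (g i) ≤
      μ (⋃ i ∈ Finset.range n, g i) +
        ∑ j ∈ Finset.range n, ∑ i ∈ Finset.range j, μ (g i ∩ g j) := by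
  induction n with
  | zero => simp
  | succ n ih =>
    have hU : (⋃ i ∈ Finset.range (n+1), g i) = (⋃ i ∈ Finset.range n, g i) ∪ g n := by
      rw [Finset.range_add_one]
      simp [Set.union_comm]
    have hint : μ ((⋃ i ∈ Finset.range n, g i) ∩ g n) ≤
        ∑ i ∈ Finset.range n, μ (g i ∩ g n) := by
      rw [Set.iUnion₂_inter]
      exact measure_biUnion_finset_le _ _
    have key : μ (⋃ i ∈ Finset.range n, g i) + μ (g n) =
        μ (⋃ i ∈ Finset.range (n+1), g i) + μ ((⋃ i ∈ Finset.range n, g i) ∩ g n) := by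
      rw [hU, measure_union_add_inter _ (hg n)]
    calc ∑ i ∈ Finset.range (n+1), μ (g i)
        = ∑ i ∈ Finset.range n, μ (g i) + μ (g n) := Finset.sum_range_succ _ _
      _ ≤ (μ (⋃ i ∈ Finset.range n, g i) +
            ∑ j ∈ Finset.range n, ∑ i ∈ Finset.range j, μ (g i ∩ g j)) + μ (g n) := by
          exact add_le_add_left ih _
      _ = (μ (⋃ i ∈ Finset.range n, g i) + μ (g n)) +
            ∑ j ∈ Finset.range n, ∑ i ∈ Finset.range j, μ (g i ∩ g j) := by ring
      _ = (μ (⋃ i ∈ Finset.range (n+1), g i) + μ ((⋃ i ∈ Finset.range n, g i) ∩ g n)) +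
            ∑ j ∈ Finset.range n, ∑ i ∈ Finset.range j, μ (g i ∩ g j) := by rw [key]
      _ ≤ μ (⋃ i ∈ Finset.range (n+1), g i) +
            (∑ i ∈ Finset.range n, μ (g i ∩ g n) +
              ∑ j ∈ Finset.range n, ∑ i ∈ Finset.range j, μ (g i ∩ g j)) := by
          rw [add_assoc]
          exact add_le_add_right (add_le_add_left hint _) _
      _ = μ (⋃ i ∈ Finset.range (n+1), g i) +
            ∑ j ∈ Finset.range (n+1), ∑ i ∈ Finset.range j, μ (g i ∩ g j) := by
          rw [Finset.sum_range_succ]; ring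

private lemma corr_bound {X : Type*} [MeasurableSpace X] (μ : Measure X)
    [IsProbabilityMeasure μ] (f : X → X) (hf : MeasurePreserving f μ μ)
    (γ : ℕ → ℝ) (c : ℝ) (A : Set X) (hA : MeasurableSet A)
    (hdec : ∀ ψ : X → ℝ, Integrable ψ μ → ∀ n : ℕ,
      |(∫ x, A.indicator (fun _ => (1:ℝ)) x * ψ (f^[n] x) ∂μ) -
        (μ A).toReal * ∫ x, ψ x ∂μ| ≤ c * (∫ x, |ψ x| ∂μ) * γ n)
    (E : Set X) (hE : MeasurableSet E) (n : ℕ) :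
    |(μ (A ∩ f^[n] ⁻¹' E)).toReal - (μ A).toReal * (μ E).toReal| ≤
      c * (μ E).toReal * γ n := by
  have hmeas : Measurable f := hf.measurable
  have hEn : MeasurableSet (f^[n] ⁻¹' E) := (hmeas.iterate n) hE
  have hψ : Integrable (E.indicator (fun _ => (1:ℝ))) μ := (integrable_const 1).indicator hE
  have h := hdec _ hψ n
  have h1 : (∫ x, A.indicator (fun _ => (1:ℝ)) x * E.indicator (fun _ => (1:ℝ)) (f^[n] x) ∂μ)
      = (μ (A ∩ f^[n] ⁻¹' E)).toReal := by
    show _ = μ.real (A ∩ f^[n] ⁻¹' E)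
    rw [← integral_indicator_one (hA.inter hEn)]
    congr 1; funext x
    by_cases hx : x ∈ A <;> by_cases hy : f^[n] x ∈ E <;>
      simp [Set.indicator_apply, hx, hy, Set.mem_preimage]
  have h2 : (∫ x, E.indicator (fun _ => (1:ℝ)) x ∂μ) = (μ E).toReal :=
    integral_indicator_one hE
  have h3 : (∫ x, |E.indicator (fun _ => (1:ℝ)) x| ∂μ) = (μ E).toReal := by
    rw [← h2]; congr 1; funext x
    by_cases hx : x ∈ E <;> simp [Set.indicator_apply, hx]
  rwa [h1, h2, h3] at h

set_option maxHeartbeats 2000000 in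
private lemma aux_main {X : Type*} [MeasurableSpace X] (μ : Measure X) [IsProbabilityMeasure μ]
    (f : X → X) (hf : MeasurePreserving f μ μ)
    (γ : ℕ → ℝ) (hγmono : Antitone γ) (hγnn : ∀ n, 0 ≤ γ n)
    (c : ℝ) (hc : 0 ≤ c)
    (A B : Set X) (hA : MeasurableSet A) (hB : MeasurableSet B)
    (hdec : ∀ ψ : X → ℝ, Integrable ψ μ → ∀ n : ℕ,
      |(∫ x, A.indicator (fun _ => (1:ℝ)) x * ψ (f^[n] x) ∂μ) -
        (μ A).toReal * ∫ x, ψ x ∂μ| ≤ c * (∫ x, |ψ x| ∂μ) * γ n)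
    (R : ℕ) (hR : ∀ i, 0 < i → i < R → A ∩ f^[i] ⁻¹' A = ∅)
    (s t : ℕ) (hs : 0 < s) (ht : 0 < t) :
    |(μ (avoidWindow f 0 s A ∩ f^[s + t] ⁻¹' B)).toReal -
        (μ B).toReal * (1 - (s : ℝ) * (μ A).toReal)| ≤
      (c * (s : ℝ) * γ t +
          c * ((s - R : ℕ) : ℝ) * ((μ A).toReal + c * γ t) * ∑ q ∈ Finset.Ico R s, γ q +
          (s : ℝ) * ((s - R : ℕ) : ℝ) * ((μ A).toReal ^ 2 + (μ A).toReal * c * γ t)) *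
        (μ B).toReal := by
  have hmeas : Measurable f := hf.measurable
  have hpre : ∀ (k : ℕ) (S : Set X), MeasurableSet S → MeasurableSet (f^[k] ⁻¹' S) :=
    fun k S hS => (hmeas.iterate k) hS
  have hμpre : ∀ (k : ℕ) (S : Set X), MeasurableSet S → μ (f^[k] ⁻¹' S) = μ S :=
    fun k S hS => (hf.iterate k).measure_preimage hS.nullMeasurableSet
  have hcomp : ∀ (k l : ℕ) (S : Set X), f^[k] ⁻¹' (f^[l] ⁻¹' S) = f^[l + k] ⁻¹' S := by
    intro k l S; ext x
    simp only [Set.mem_preimage, Function.iterate_add_apply]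
  set a : ℝ := (μ A).toReal with ha_def
  set b : ℝ := (μ B).toReal with hb_def
  have ha : 0 ≤ a := ENNReal.toReal_nonneg
  have hb : 0 ≤ b := ENNReal.toReal_nonneg
  set C : Set X := f^[s + t] ⁻¹' B with hC_def
  set T : ℕ → Set X := fun i => f^[i] ⁻¹' A ∩ C with hT_def
  have hTm : ∀ i, MeasurableSet (T i) := fun i => (hpre i A hA).inter (hpre _ B hB)
  set V : Set X := ⋃ i ∈ Finset.range s, f^[i] ⁻¹' A with hV_def
  have hVm : MeasurableSet V := by
    exact Finset.measurableSet_biUnion _ (fun i _ => hpre i A hA)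
  have hCV : C ∩ V = ⋃ i ∈ Finset.range s, T i := by
    ext x; simp only [hV_def, hT_def, Set.mem_inter_iff, Set.mem_iUnion, Finset.mem_range]
    tauto
  have hCVm : MeasurableSet (C ∩ V) := (hpre _ B hB).inter hVm
  set u : ℝ := (μ (C ∩ V)).toReal with hu_def
  -- the window identity
  have hset : avoidWindow f 0 s A ∩ C = C \ V := by
    ext x
    simp only [avoidWindow, zero_add, ← Finset.range_eq_Ico, Set.mem_inter_iff,
      Set.mem_iInter, Set.mem_preimage, Set.mem_compl_iff, Set.mem_diff, Set.mem_iUnion,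
      Finset.mem_range, hV_def]
    aesop
  have hWC : (μ (avoidWindow f 0 s A ∩ C)).toReal = b - u := by
    have h1 : μ (C ∩ V) + μ (C \ V) = μ C := measure_inter_add_diff C hVm
    have h2 : μ C = μ B := hμpre _ B hB
    rw [hset]
    have h3 := congrArg ENNReal.toReal h1
    rw [ENNReal.toReal_add (measure_ne_top μ _) (measure_ne_top μ _), h2] at h3
    linarith [h3]
  -- single bound
  have hsingle : ∀ i ∈ Finset.range s, |(μ (T i)).toReal - a * b| ≤ c * b * γ t := by
    intro i hi
    rw [Finset.mem_range] at hi
    have hTi : T i = f^[i] ⁻¹' (A ∩ f^[s + t - i] ⁻¹' B) := by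
      rw [hT_def]
      simp only
      rw [Set.preimage_inter, hcomp i (s + t - i) B, show s + t - i + i = s + t by omega]
    have hμT : μ (T i) = μ (A ∩ f^[s + t - i] ⁻¹' B) := by
      rw [hTi]; exact hμpre i _ (hA.inter (hpre _ B hB))
    have h := corr_bound μ f hf γ c A hA hdec B hB (s + t - i)
    have hγk : γ (s + t - i) ≤ γ t := hγmono (by omega)
    rw [hμT]
    have hcb : 0 ≤ c * b := mul_nonneg hc hb
    calc |(μ (A ∩ f^[s + t - i] ⁻¹' B)).toReal - a * b| ≤ c * b * γ (s + t - i) := h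
      _ ≤ c * b * γ t := by nlinarith
  -- sum of singles
  have hsum_single : |(∑ i ∈ Finset.range s, (μ (T i)).toReal) - (s : ℝ) * (a * b)| ≤
      (s : ℝ) * (c * b * γ t) := by
    have e : (∑ i ∈ Finset.range s, ((μ (T i)).toReal - a * b)) =
        (∑ i ∈ Finset.range s, (μ (T i)).toReal) - (s : ℝ) * (a * b) := by
      rw [Finset.sum_sub_distrib, Finset.sum_const, Finset.card_range, nsmul_eq_mul]
    rw [← e]
    calc |∑ i ∈ Finset.range s, ((μ (T i)).toReal - a * b)| ≤
        ∑ i ∈ Finset.range s, |(μ (T i)).toReal - a * b| := Finset.abs_sum_le_sum_abs _ _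
      _ ≤ ∑ _i ∈ Finset.range s, c * b * γ t := Finset.sum_le_sum hsingle
      _ = (s : ℝ) * (c * b * γ t) := by
          rw [Finset.sum_const, Finset.card_range, nsmul_eq_mul]
  -- vanishing pairs
  have hpair_zero : ∀ j i : ℕ, i < j → j - i < R → μ (T i ∩ T j) = 0 := by
    intro j i hij hq
    have hsub : T i ∩ T j ⊆ (∅ : Set X) := by
      intro x hx
      have h1 : f^[i] x ∈ A := hx.1.1
      have h2 : f^[j] x ∈ A := hx.2.1
      have h3 : f^[j - i] (f^[i] x) ∈ A := by
        rw [← Function.iterate_add_apply f (j - i) i, show j - i + i = j by omega]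
        exact h2
      have hmem : f^[i] x ∈ A ∩ f^[j - i] ⁻¹' A := ⟨h1, h3⟩
      rw [hR (j - i) (by omega) hq] at hmem
      exact hmem
    have : T i ∩ T j = ∅ := Set.subset_empty_iff.mp hsub
    rw [this, measure_empty]
  -- pair bound
  have hpair_bd : ∀ j i : ℕ, i < j → j < s → R ≤ j - i →
      (μ (T i ∩ T j)).toReal ≤
        (a ^ 2 + a * c * γ t) * b + (c * (a + c * γ t) * b) * γ (j - i) := by
    intro j i hij hjs hq
    have hD : MeasurableSet (A ∩ f^[s + t - j] ⁻¹' B) := hA.inter (hpre _ B hB)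
    have hTT : T i ∩ T j = f^[i] ⁻¹' (A ∩ f^[j - i] ⁻¹' (A ∩ f^[s + t - j] ⁻¹' B)) := by
      ext x
      simp only [hT_def, hC_def, Set.mem_inter_iff, Set.mem_preimage,
        ← Function.iterate_add_apply]
      rw [show j - i + i = j by omega, show s + t - j + j = s + t by omega]
      tauto
    have hμTT : μ (T i ∩ T j) = μ (A ∩ f^[j - i] ⁻¹' (A ∩ f^[s + t - j] ⁻¹' B)) := by
      rw [hTT]; exact hμpre i _ (hA.inter (hpre _ _ hD))
    have hDle : (μ (A ∩ f^[s + t - j] ⁻¹' B)).toReal ≤ (a + c * γ t) * b := by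
      have h := corr_bound μ f hf γ c A hA hdec B hB (s + t - j)
      have hγk : γ (s + t - j) ≤ γ t := hγmono (by omega)
      have habs := (abs_le.mp h).2
      nlinarith [mul_nonneg hc hb]
    have hDnn : (0:ℝ) ≤ (μ (A ∩ f^[s + t - j] ⁻¹' B)).toReal := ENNReal.toReal_nonneg
    have h2 := corr_bound μ f hf γ c A hA hdec (A ∩ f^[s + t - j] ⁻¹' B) hD (j - i)
    have habs2 := (abs_le.mp h2).2
    rw [hμTT]
    have hcγq : 0 ≤ c * γ (j - i) := mul_nonneg hc (hγnn (j - i))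
    have hstep1 : (μ (A ∩ f^[j - i] ⁻¹' (A ∩ f^[s + t - j] ⁻¹' B))).toReal ≤
        (a + c * γ (j - i)) * (μ (A ∩ f^[s + t - j] ⁻¹' B)).toReal := by nlinarith
    have hstep2 : (a + c * γ (j - i)) * (μ (A ∩ f^[s + t - j] ⁻¹' B)).toReal ≤
        (a + c * γ (j - i)) * ((a + c * γ t) * b) :=
      mul_le_mul_of_nonneg_left hDle (by linarith)
    calc (μ (A ∩ f^[j - i] ⁻¹' (A ∩ f^[s + t - j] ⁻¹' B))).toReal ≤
        (a + c * γ (j - i)) * ((a + c * γ t) * b) := le_trans hstep1 hstep2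
      _ = (a ^ 2 + a * c * γ t) * b + (c * (a + c * γ t) * b) * γ (j - i) := by ring
  -- pair sum bound
  set K1 : ℝ := (a ^ 2 + a * c * γ t) * b with hK1_def
  set K2 : ℝ := c * (a + c * γ t) * b with hK2_def
  set G : ℝ := ∑ q ∈ Finset.Ico R s, γ q with hG_def
  have hK1 : 0 ≤ K1 := by
    have : 0 ≤ a * c * γ t := mul_nonneg (mul_nonneg ha hc) (hγnn t)
    nlinarith [sq_nonneg a]
  have hK2 : 0 ≤ K2 :=
    mul_nonneg (mul_nonneg hc (by nlinarith [mul_nonneg hc (hγnn t)])) hb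
  have hG0 : 0 ≤ G := Finset.sum_nonneg (fun q _ => hγnn q)
  set PS : ℝ := ∑ j ∈ Finset.range s, ∑ i ∈ Finset.range j, (μ (T i ∩ T j)).toReal
    with hPS_def
  have hPSnn : 0 ≤ PS :=
    Finset.sum_nonneg fun j _ => Finset.sum_nonneg fun i _ => ENNReal.toReal_nonneg
  have hsr : (((s - R : ℕ) : ℝ)) ≤ (s : ℝ) := by exact_mod_cast Nat.sub_le s R
  have hsr0 : (0:ℝ) ≤ ((s - R : ℕ) : ℝ) := Nat.cast_nonneg _
  have hPS : PS ≤ ((s - R : ℕ) : ℝ) * (((s - R : ℕ) : ℝ) * K1 + K2 * G) := by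
    have hrow : ∀ j ∈ Finset.range s,
        (∑ i ∈ Finset.range j, (μ (T i ∩ T j)).toReal) ≤
          if R ≤ j then ((s - R : ℕ) : ℝ) * K1 + K2 * G else 0 := by
      intro j hj
      rw [Finset.mem_range] at hj
      have e0 : (∑ i ∈ (Finset.range j).filter (fun i => R ≤ j - i),
          (μ (T i ∩ T j)).toReal) = ∑ i ∈ Finset.range j, (μ (T i ∩ T j)).toReal := by
        refine Finset.sum_filter_of_ne fun i hi hne => ?_
        rw [Finset.mem_range] at hi
        by_contra hcon
        exact hne (by rw [hpair_zero j i hi (by omega)]; simp)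
      rw [← e0]
      by_cases hRj : R ≤ j
      · rw [if_pos hRj]
        have hcard : (((Finset.range j).filter (fun i => R ≤ j - i)).card : ℝ) ≤
            ((s - R : ℕ) : ℝ) := by
          have hsub : (Finset.range j).filter (fun i => R ≤ j - i) ⊆
              Finset.range (s - R) := by
            intro i hi
            rw [Finset.mem_filter, Finset.mem_range] at hi
            rw [Finset.mem_range]
            omega
          have hcc := Finset.card_le_card hsub
          rw [Finset.card_range] at hcc
          exact_mod_cast hcc
        have hγsum : (∑ i ∈ (Finset.range j).filter (fun i => R ≤ j - i), γ (j - i)) ≤ G := by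
          have einj : (∑ i ∈ (Finset.range j).filter (fun i => R ≤ j - i), γ (j - i)) =
              ∑ q ∈ ((Finset.range j).filter (fun i => R ≤ j - i)).image (fun i => j - i),
                γ q := by
            rw [Finset.sum_image]
            intro x hx y hy hxy
            rw [Finset.mem_coe, Finset.mem_filter, Finset.mem_range] at hx hy
            simp only at hxy
            omega
          rw [einj, hG_def]
          refine Finset.sum_le_sum_of_subset_of_nonneg ?_ (fun q _ _ => hγnn q)
          intro q hq
          rw [Finset.mem_image] at hq
          obtain ⟨i, hi, rfl⟩ := hq
          rw [Finset.mem_filter, Finset.mem_range] at hi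
          rw [Finset.mem_Ico]
          omega
        calc (∑ i ∈ (Finset.range j).filter (fun i => R ≤ j - i),
              (μ (T i ∩ T j)).toReal) ≤
            ∑ i ∈ (Finset.range j).filter (fun i => R ≤ j - i), (K1 + K2 * γ (j - i)) := by
              refine Finset.sum_le_sum fun i hi => ?_
              rw [Finset.mem_filter, Finset.mem_range] at hi
              exact hpair_bd j i hi.1 hj hi.2
          _ = (((Finset.range j).filter (fun i => R ≤ j - i)).card : ℝ) * K1 +
              K2 * ∑ i ∈ (Finset.range j).filter (fun i => R ≤ j - i), γ (j - i) := by
              rw [Finset.sum_add_distrib, Finset.sum_const, nsmul_eq_mul, Finset.mul_sum]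
          _ ≤ ((s - R : ℕ) : ℝ) * K1 + K2 * G :=
              add_le_add (mul_le_mul_of_nonneg_right hcard hK1)
                (mul_le_mul_of_nonneg_left hγsum hK2)
      · rw [if_neg hRj]
        have : (Finset.range j).filter (fun i => R ≤ j - i) = ∅ :=
          Finset.filter_false_of_mem fun i hi => by
            rw [Finset.mem_range] at hi; omega
        rw [this, Finset.sum_empty]
    calc PS ≤ ∑ j ∈ Finset.range s,
          (if R ≤ j then ((s - R : ℕ) : ℝ) * K1 + K2 * G else 0) :=
        Finset.sum_le_sum hrow
      _ = ∑ j ∈ (Finset.range s).filter (fun j => R ≤ j),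
          (((s - R : ℕ) : ℝ) * K1 + K2 * G) := (Finset.sum_filter _ _).symm
      _ = ((s - R : ℕ) : ℝ) * (((s - R : ℕ) : ℝ) * K1 + K2 * G) := by
          have hfe : (Finset.range s).filter (fun j => R ≤ j) = Finset.Ico R s := by
            ext j; simp only [Finset.mem_filter, Finset.mem_range, Finset.mem_Ico]; omega
          rw [Finset.sum_const, hfe, Nat.card_Ico, nsmul_eq_mul]
  -- union bounds
  have hne_sum : (∑ i ∈ Finset.range s, μ (T i)) ≠ ⊤ :=
    (ENNReal.sum_lt_top.mpr fun i _ => measure_lt_top μ _).ne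
  have hUle : u ≤ ∑ i ∈ Finset.range s, (μ (T i)).toReal := by
    have h : μ (C ∩ V) ≤ ∑ i ∈ Finset.range s, μ (T i) := by
      rw [hCV]; exact measure_biUnion_finset_le _ _
    have := ENNReal.toReal_le_toReal (measure_ne_top μ _) hne_sum |>.mpr h
    rwa [ENNReal.toReal_sum (fun i _ => measure_ne_top μ _)] at this
  have hUge : (∑ i ∈ Finset.range s, (μ (T i)).toReal) ≤ u + PS := by
    have h := bonferroni μ T hTm s
    rw [← hCV] at h
    have hpair_ne : (∑ j ∈ Finset.range s, ∑ i ∈ Finset.range j, μ (T i ∩ T j)) ≠ ⊤ :=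
      (ENNReal.sum_lt_top.mpr fun j _ =>
        ENNReal.sum_lt_top.mpr fun i _ => measure_lt_top μ _).ne
    have hne2 : (μ (C ∩ V) + ∑ j ∈ Finset.range s, ∑ i ∈ Finset.range j,
        μ (T i ∩ T j)) ≠ ⊤ := ENNReal.add_ne_top.mpr ⟨measure_ne_top μ _, hpair_ne⟩
    have h2 := ENNReal.toReal_le_toReal hne_sum hne2 |>.mpr h
    rw [ENNReal.toReal_sum (fun i _ => measure_ne_top μ _),
      ENNReal.toReal_add (measure_ne_top μ _) hpair_ne] at h2
    have h3 : ((∑ j ∈ Finset.range s, ∑ i ∈ Finset.range j, μ (T i ∩ T j))).toReal = PS := by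
      rw [ENNReal.toReal_sum (fun j _ => (ENNReal.sum_lt_top.mpr
        fun i _ => measure_lt_top μ _).ne), hPS_def]
      exact Finset.sum_congr rfl fun j _ =>
        ENNReal.toReal_sum fun i _ => measure_ne_top μ _
    rw [h3] at h2
    exact h2
  -- final assembly
  have hfinal : |(s : ℝ) * (a * b) - u| ≤ (s : ℝ) * (c * b * γ t) + PS := by
    rw [abs_le]
    have h1 := abs_le.mp hsum_single
    constructor
    · linarith [h1.1, hUge]
    · linarith [h1.2, hUle, hPSnn]
  have hgoal1 : (μ (avoidWindow f 0 s A ∩ C)).toReal - b * (1 - (s : ℝ) * a) =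
      (s : ℝ) * (a * b) - u := by rw [hWC]; ring
  rw [hgoal1]
  calc |(s : ℝ) * (a * b) - u| ≤ (s : ℝ) * (c * b * γ t) + PS := hfinal
    _ ≤ (s : ℝ) * (c * b * γ t) +
        ((s - R : ℕ) : ℝ) * (((s - R : ℕ) : ℝ) * K1 + K2 * G) := add_le_add_right hPS _
    _ ≤ (s : ℝ) * (c * b * γ t) +
        ((s : ℝ) * (((s - R : ℕ) : ℝ) * K1) + ((s - R : ℕ) : ℝ) * (K2 * G)) := by
        have hd2 : ((s - R : ℕ) : ℝ) * (((s - R : ℕ) : ℝ) * K1) ≤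
            (s : ℝ) * (((s - R : ℕ) : ℝ) * K1) :=
          mul_le_mul_of_nonneg_right hsr (mul_nonneg hsr0 hK1)
        linarith [hd2]
    _ = (c * (s : ℝ) * γ t + c * ((s - R : ℕ) : ℝ) * (a + c * γ t) * G +
        (s : ℝ) * ((s - R : ℕ) : ℝ) * (a ^ 2 + a * c * γ t)) * b := by
        rw [hK1_def, hK2_def]
        ring

theorem inductive_step_estimate_L1 {X : Type*} [MeasurableSpace X] (μ : Measure X)
    [IsProbabilityMeasure μ] (f : X → X) (hf : MeasurePreserving f μ μ)
    (𝒞 : Set (X → ℝ)) (N : (X → ℝ) → ℝ) (γ : ℕ → ℝ)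
    (hγmono : Antitone γ) (hγ0 : Filter.Tendsto γ Filter.atTop (nhds 0))
    (hdecay : ∀ φ ∈ 𝒞, ∀ ψ : X → ℝ, Integrable ψ μ → ∀ n : ℕ,
      |(∫ x, φ x * ψ (f^[n] x) ∂μ) - (∫ x, φ x ∂μ) * ∫ x, ψ x ∂μ| ≤
        N φ * (∫ x, |ψ x| ∂μ) * γ n)
    (A B : Set X) (hA : MeasurableSet A) (hB : MeasurableSet B)
    (hind : A.indicator (fun _ => (1 : ℝ)) ∈ 𝒞)
    -- `R` is the first return time of the set `A`:
    -- `A` does not intersect its preimages before time `R`.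
    (R : ℕ) (hR : ∀ i, 0 < i → i < R → A ∩ f^[i] ⁻¹' A = ∅)
    (s t m : ℕ) (hs : 0 < s) (ht : 0 < t) (hm : 0 < m) :
    |(μ (avoidWindow f 0 s A ∩ f^[s + t] ⁻¹' B)).toReal -
        (μ B).toReal * (1 - (s : ℝ) * (μ A).toReal)| ≤
      (N (A.indicator fun _ => (1 : ℝ)) * (s : ℝ) * γ t +
          N (A.indicator fun _ => (1 : ℝ)) * ((s - R : ℕ) : ℝ) *
            ((μ A).toReal + N (A.indicator fun _ => (1 : ℝ)) * γ t) *
            ∑ q ∈ Finset.Ico R s, γ q +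
          (s : ℝ) * ((s - R : ℕ) : ℝ) *
            ((μ A).toReal ^ 2 +
              (μ A).toReal * N (A.indicator fun _ => (1 : ℝ)) * γ t)) *
        (μ B).toReal := by
  set φ : X → ℝ := A.indicator (fun _ => (1 : ℝ)) with hφ_def
  have hγnn : ∀ n, 0 ≤ γ n := fun n => hγmono.le_of_tendsto hγ0 n
  have hiφ : (∫ x, φ x ∂μ) = (μ A).toReal := integral_indicator_one hA
  have hNγ : ∀ n, 0 ≤ N φ * γ n := by
    intro n
    have h := hdecay φ hind (fun _ => 1) (integrable_const 1) n
    have e1 : (∫ x, φ x * (fun _ : X => (1:ℝ)) (f^[n] x) ∂μ) = ∫ x, φ x ∂μ := by simp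
    have e2 : (∫ x, (fun _ : X => (1:ℝ)) x ∂μ) = 1 := by simp
    have e3 : (∫ x, |(fun _ : X => (1:ℝ)) x| ∂μ) = 1 := by simp
    rw [e1, e2, e3, mul_one, sub_self, abs_zero, mul_one] at h
    exact h
  rcases le_or_gt 0 (N φ) with hN | hN
  · exact aux_main μ f hf γ hγmono hγnn (N φ) hN A B hA hB
      (fun ψ hψ n => by rw [← hiφ]; exact hdecay φ hind ψ hψ n) R hR s t hs ht
  · have hγz : ∀ n, γ n = 0 := fun n => le_antisymm (by nlinarith [hNγ n]) (hγnn n)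
    have h0 := aux_main μ f hf γ hγmono hγnn 0 le_rfl A B hA hB
      (fun ψ hψ n => by
        have h := hdecay φ hind ψ hψ n
        rw [hiφ] at h
        rw [hγz n] at h ⊢
        simpa using h) R hR s t hs ht
    have hG : (∑ q ∈ Finset.Ico R s, γ q) = 0 := Finset.sum_eq_zero fun q _ => hγz q
    rw [hγz t, hG] at h0 ⊢
    calc _ ≤ _ := h0
      _ = (N φ * (s:ℝ) * 0 + N φ * ((s - R : ℕ) : ℝ) * ((μ A).toReal + N φ * 0) * 0 +
          (s:ℝ) * ((s - R : ℕ) : ℝ) * ((μ A).toReal ^ 2 + (μ A).toReal * N φ * 0)) *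
          (μ B).toReal := by ring
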